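/- ℙ²-almost surely, on the event [0 ∈ 𝒵], for every z ∈ 𝒵 ∩ (0,∞) the greedy walk started at 0 never removes all marks from z; that is, ω_n(z) ≥ 1 for all n ≥ 0. (On the first visit to such z, the gap on its left is at least its initial size and the configuration to its right is untouched, so by definition of 𝒵 the walk stays to the right of z thereafter, leaving the second mark at z intact.) -/

import Mathlib

open scoped ENNReal

noncomputable section

/-- The number of points of a configuration `Xs ⊆ ℝ` lying in a window `A`. -/
def ptCount (Xs : Set ℝ) (A : Set ℝ) : ℕ := (Xs ∩ A).ncard

/-- `N` is a Poisson point process of intensity `c` (with respect to Lebesgue measure)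
under the probability measure `P`: configurations are a.s. locally finite, the number of
points in any finite-volume measurable window is Poisson distributed with mean
`c * volume A`, and the counts in pairwise disjoint windows are independent. -/
def IsPoissonPP {Ω : Type} [MeasurableSpace Ω] (P : MeasureTheory.Measure Ω)
    (N : Ω → Set ℝ) (c : ℝ) : Prop :=
  (∀ᵐ ωs ∂P, ∀ r : ℝ, (N ωs ∩ Set.Icc (-r) r).Finite) ∧
  (∀ A : Set ℝ, MeasurableSet A → Measurable fun ωs => ptCount (N ωs) A) ∧
  (∀ A : Set ℝ, MeasurableSet A → MeasureTheory.volume A ≠ ⊤ → ∀ n : ℕ,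
      P {ωs | ptCount (N ωs) A = n} =
        ENNReal.ofReal (Real.exp (-(c * (MeasureTheory.volume A).toReal)) *
          (c * (MeasureTheory.volume A).toReal) ^ n / n.factorial)) ∧
  (∀ (m : ℕ) (A : Fin m → Set ℝ), (∀ i, MeasurableSet (A i)) →
      Pairwise (Function.onFun Disjoint A) →
      ProbabilityTheory.iIndepFun
        (fun i ωs => ptCount (N ωs) (A i)) P)

/-- `(X, Y)` is a two-mark Poisson configuration of parameter `p` under `P`:
`X` is a Poisson point process of intensity `1` and `Y` is an independent `p`-thinning
of `X`.  Equivalently, `Y` (the doubly-marked points) and `X \ Y` (the singly-marked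
points) are independent Poisson point processes of respective intensities `p` and `1-p`. -/
def IsTwoMarkPoisson {Ω : Type} [MeasurableSpace Ω] (P : MeasureTheory.Measure Ω)
    (X Y : Ω → Set ℝ) (p : ℝ) : Prop :=
  (∀ ωs, Y ωs ⊆ X ωs) ∧
  IsPoissonPP P Y p ∧
  IsPoissonPP P (fun ωs => X ωs \ Y ωs) (1 - p) ∧
  (∀ (m : ℕ) (A : Fin m → Set ℝ), (∀ i, MeasurableSet (A i)) →
      Pairwise (Function.onFun Disjoint A) →
      ProbabilityTheory.iIndepFun
        (fun (k : Fin m × Bool) ωs =>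
          ptCount (if k.2 then Y ωs else X ωs \ Y ωs) (A k.1)) P)

/-- The model of the paper, under the Palm measure `ℙ¹`:
* `X` is a Poisson point process of intensity `1` on `ℝ`, conditioned (in the Palm sense)
  to have a point at the origin, and `Y ⊆ X` is an independent `p`-thinning of `X`;
  points of `Y` carry two marks and the remaining points of `X` carry one mark
  (field `marks x 0`).
* For every starting point `x ∈ X`, `S x` is the greedy walk started at `x`:
  `S x 0 = x`, the configuration evolves by `ω_{n+1} = ω_n - δ_{S_n}`, and `S x (n+1)`
  is (a.s.) the unique point `y ≠ S x n` carrying a mark in `ω_n` that is nearest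
  to `S x n`.
* `Sp`/`marksp` is the analogous greedy walk run on the configuration
  `ω⁺ = ω` restricted to `(0,∞)` plus a single mark `δ₀` at the origin. -/
structure GreedyModel where
  Ω : Type
  [mΩ : MeasurableSpace Ω]
  P : MeasureTheory.Measure Ω
  hprob : MeasureTheory.IsProbabilityMeasure P
  p : ℝ
  hp0 : 0 < p
  hp1 : p < 1
  X : Ω → Set ℝ
  Y : Ω → Set ℝ
  hYX : ∀ ωs, Y ωs ⊆ X ωs
  /-- Palm conditioning on `0 ∈ 𝒳`: there is a point at the origin. -/
  h0X : ∀ ωs, (0 : ℝ) ∈ X ωs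
  /-- The point at the origin carries two marks with probability `p`. -/
  h0Y : P {ωs | (0 : ℝ) ∈ Y ωs} = ENNReal.ofReal p
  /-- Away from the origin, the configuration is a two-mark Poisson process. -/
  hpoisson : IsTwoMarkPoisson P (fun ωs => X ωs \ {0}) (fun ωs => Y ωs \ {0}) p
  /-- The mark at the origin is independent of the rest of the configuration. -/
  hindep0 : ∀ (m : ℕ) (A : Fin m × Bool → Set ℝ), (∀ i, MeasurableSet (A i)) →
      ProbabilityTheory.IndepFun
        ({ωs | (0 : ℝ) ∈ Y ωs}.indicator fun _ => (1 : ℕ))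
        (fun ωs (k : Fin m × Bool) =>
          ptCount (if k.2 then Y ωs \ {0} else X ωs \ (Y ωs ∪ {0})) (A k)) P
  /-- The greedy walk started at `x` and the associated evolving mark configurations. -/
  S : ℝ → ℕ → Ω → ℝ
  marks : ℝ → ℕ → Ω → ℝ → ℕ
  /-- Initially, points of `Y` carry two marks, other points of `X` carry one. -/
  hmarks0 : ∀ x ωs z, marks x 0 ωs z = (X ωs).indicator 1 z + (Y ωs).indicator 1 z
  /-- `ω_{n+1} = ω_n - δ_{S_n}`. -/
  hmarksrec : ∀ x n ωs z,
      marks x (n + 1) ωs z = marks x n ωs z - ({S x n ωs} : Set ℝ).indicator 1 z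
  /-- The walk started at a point `x` of `X` starts at `x` itself. -/
  hS0 : ∀ ωs, ∀ x ∈ X ωs, S x 0 ωs = x
  hmeasS : ∀ x n, Measurable fun ωs => S x n ωs
  /-- Almost surely, for each starting point `x ∈ X`, the walk is well defined:
  `S x (n+1)` is a point distinct from `S x n`, still carrying a mark in `ω_n`, and
  strictly closer to `S x n` than any other such point. -/
  hwalk : ∀ᵐ ωs ∂P, ∀ x ∈ X ωs, ∀ n : ℕ,
      S x (n + 1) ωs ≠ S x n ωs ∧ 1 ≤ marks x n ωs (S x (n + 1) ωs) ∧
      ∀ z : ℝ, z ≠ S x n ωs → z ≠ S x (n + 1) ωs → 1 ≤ marks x n ωs z →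
        |S x (n + 1) ωs - S x n ωs| < |z - S x n ωs|
  /-- The greedy walk on `ω⁺`. -/
  Sp : ℕ → Ω → ℝ
  marksp : ℕ → Ω → ℝ → ℕ
  hmarksp0 : ∀ ωs z, marksp 0 ωs z =
      ({0} : Set ℝ).indicator 1 z +
        (Set.Ioi (0 : ℝ)).indicator
          (fun w => (X ωs).indicator 1 w + (Y ωs).indicator 1 w) z
  hmarksprec : ∀ n ωs z,
      marksp (n + 1) ωs z = marksp n ωs z - ({Sp n ωs} : Set ℝ).indicator 1 z
  hSp0 : ∀ ωs, Sp 0 ωs = 0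
  hmeasSp : ∀ n, Measurable fun ωs => Sp n ωs
  hwalkp : ∀ᵐ ωs ∂P, ∀ n : ℕ,
      Sp (n + 1) ωs ≠ Sp n ωs ∧ 1 ≤ marksp n ωs (Sp (n + 1) ωs) ∧
      ∀ z : ℝ, z ≠ Sp n ωs → z ≠ Sp (n + 1) ωs → 1 ≤ marksp n ωs z →
        |Sp (n + 1) ωs - Sp n ωs| < |z - Sp n ωs|

attribute [instance] GreedyModel.mΩ

/-- `T_A = inf {n ≥ 1 : S_n ∈ A}`, with value `∞` (in `ℕ∞`) if the walk never enters `A`. -/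
def hitTime (S : ℕ → ℝ) (A : Set ℝ) : ℕ∞ :=
  sInf ((fun n : ℕ => (n : ℕ∞)) '' {n : ℕ | 1 ≤ n ∧ S n ∈ A})

/-- The points `X₀ = 0 < X₁ < X₂ < ⋯` of the configuration `Xs` on `[0,∞)`:
`nthPoint Xs k` is `X_k`. -/
def nthPoint (Xs : Set ℝ) : ℕ → ℝ
  | 0 => 0
  | n + 1 => sInf (Xs ∩ Set.Ioi (nthPoint Xs n))

open Classical in
/-- The observable `𝓡_y` of the paper, for the walk `S` (with evolving marks `marks`)
and `y ∈ 𝒳 ∩ (0,∞)`.  It is `0` if `T_{ℝ₋} < T_y`; otherwise, labelling the set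
`𝒳_{T_y} ∩ [0,y]` of points still carrying a mark at time `T_y` as
`0 = z_n < ⋯ < z₁ < z₀ = y`, it is `max {y - z_j : y - z_j > 2 (y - z_{j-1})}`
(the predecessor `z_{j-1}` of a point `z_j` of the configuration being the `sInf` of the
part of the configuration strictly above `z_j`). -/
def RScript (marks : ℕ → ℝ → ℕ) (S : ℕ → ℝ) (y : ℝ) : ℝ :=
  if hitTime S (Set.Iio 0) < hitTime S {y} then 0
  else
    let Z : Set ℝ := {z : ℝ | 1 ≤ marks (hitTime S {y}).toNat z} ∩ Set.Icc 0 y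
    sSup {d : ℝ | ∃ z ∈ Z, d = y - z ∧ y - z > 2 * (y - sInf (Z ∩ Set.Ioi z))}


/-- The set `𝒵 ⊆ 𝒴` of doubly-marked points `x` such that the greedy walk started at `x`
stays strictly to the right of `x` forever: `Sₙˣ > x` for all `n ≥ 1`. -/
def ZSet (M : GreedyModel) (ωs : M.Ω) : Set ℝ :=
  {x : ℝ | x ∈ M.Y ωs ∧ ∀ n : ℕ, 1 ≤ n → x < M.S x n ωs}

/-- The stationary observable `R_y` associated with a configuration `Z ∋ y`: labelling the
points of `Z ∩ (-∞, y]` in decreasing order `⋯ < z₂ < z₁ < z₀ = y`, it is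
`sup {y - z_j : y - z_j > 2 (y - z_{j-1}), j ≥ 1}` (the predecessor `z_{j-1}` of a point
`z_j` being the `sInf` of the part of the configuration strictly above `z_j`). -/
def RBig (Z : Set ℝ) (y : ℝ) : ℝ :=
  sSup {d : ℝ | ∃ z ∈ Z ∩ Set.Iio y, d = y - z ∧ y - z > 2 * (y - sInf (Z ∩ Set.Ioi z))}

/-- Deterministic core of the argument: on any configuration where the greedy walks
are well defined, a point `z ∈ 𝒵 ∩ (0,∞)` is never cleared by the walk started at `0`. -/
theorem key_never_cleared (M : GreedyModel) (ωs : M.Ω)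
    (H : ∀ x ∈ M.X ωs, ∀ n : ℕ,
      M.S x (n + 1) ωs ≠ M.S x n ωs ∧ 1 ≤ M.marks x n ωs (M.S x (n + 1) ωs) ∧
      ∀ w : ℝ, w ≠ M.S x n ωs → w ≠ M.S x (n + 1) ωs → 1 ≤ M.marks x n ωs w →
        |M.S x (n + 1) ωs - M.S x n ωs| < |w - M.S x n ωs|)
    (z : ℝ) (hzZ : z ∈ ZSet M ωs) (hz0 : 0 < z) :
    ∀ n : ℕ, 1 ≤ M.marks 0 n ωs z := by
  have h0X : (0 : ℝ) ∈ M.X ωs := M.h0X ωs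
  have hzY : z ∈ M.Y ωs := hzZ.1
  have hzX : z ∈ M.X ωs := M.hYX ωs hzY
  have marks20 : M.marks 0 0 ωs z = 2 := by
    rw [M.hmarks0, Set.indicator_of_mem hzX, Set.indicator_of_mem hzY]; rfl
  by_cases hvis : ∃ j : ℕ, M.S 0 j ωs = z
  · -- `T` is the first visit time
    have hT : M.S 0 (Nat.find hvis) ωs = z := Nat.find_spec hvis
    set T := Nat.find hvis with hTdef
    have hTmin : ∀ j, j < T → M.S 0 j ωs ≠ z := fun j hj => Nat.find_min hvis hj
    -- before time `T` the walk stays strictly left of `z`, and `z` keeps both marks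
    have claim1 : ∀ j, j ≤ T → M.marks 0 j ωs z = 2 ∧ (j < T → M.S 0 j ωs < z) := by
      intro j
      induction j with
      | zero =>
        intro _
        exact ⟨marks20, fun _ => by rw [M.hS0 ωs 0 h0X]; exact hz0⟩
      | succ j ih =>
        intro hj
        obtain ⟨hm, hs⟩ := ih (Nat.le_of_succ_le hj)
        have hjT : j < T := Nat.lt_of_succ_le hj
        have hsj : M.S 0 j ωs < z := hs hjT
        have hnm : z ∉ ({M.S 0 j ωs} : Set ℝ) :=
          fun h => hTmin j hjT (Set.eq_of_mem_singleton h).symm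
        have hmark : M.marks 0 (j + 1) ωs z = 2 := by
          rw [M.hmarksrec, Set.indicator_of_notMem hnm, hm]
          rfl
        refine ⟨hmark, fun hjT' => ?_⟩
        have hne : M.S 0 (j + 1) ωs ≠ z := hTmin _ hjT'
        rcases lt_trichotomy (M.S 0 (j + 1) ωs) z with h | h | h
        · exact h
        · exact absurd h hne
        · exfalso
          have h1 := (H 0 h0X j).2.2 z (ne_of_gt hsj) (fun hz' => hne hz'.symm)
            (by rw [hm]; norm_num)
          rw [abs_of_pos (by linarith), abs_of_pos (by linarith)] at h1
          linarith
    have hmT2 : M.marks 0 T ωs z = 2 := (claim1 T le_rfl).1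
    -- before time `T` the walk does not touch any point `≥ z`
    have untouched : ∀ j, j ≤ T →
        (∀ w, z ≤ w → M.marks 0 j ωs w = M.marks 0 0 ωs w) ∧
        (∀ w, M.marks 0 j ωs w ≤ M.marks 0 0 ωs w) := by
      intro j
      induction j with
      | zero => intro _; exact ⟨fun _ _ => rfl, fun _ => le_rfl⟩
      | succ j ih =>
        intro hj
        obtain ⟨heq, hle⟩ := ih (Nat.le_of_succ_le hj)
        have hjT : j < T := Nat.lt_of_succ_le hj
        have hsj : M.S 0 j ωs < z := (claim1 j (le_of_lt hjT)).2 hjT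
        constructor
        · intro w hw
          have hnm : w ∉ ({M.S 0 j ωs} : Set ℝ) := by
            simp only [Set.mem_singleton_iff]
            intro h; rw [h] at hw; linarith
          rw [M.hmarksrec, Set.indicator_of_notMem hnm, heq w hw, Nat.sub_zero]
        · intro w
          calc M.marks 0 (j + 1) ωs w ≤ M.marks 0 j ωs w := by
                rw [M.hmarksrec]; exact Nat.sub_le _ _
            _ ≤ M.marks 0 0 ωs w := hle w
    -- coupling of the walk from `0` after time `T` with the walk from `z`
    have claim2 : ∀ k : ℕ, M.S 0 (T + k) ωs = M.S z k ωs ∧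
        (∀ w, z ≤ w → M.marks 0 (T + k) ωs w = M.marks z k ωs w) ∧
        (∀ w, M.marks 0 (T + k) ωs w ≤ M.marks z k ωs w) := by
      intro k
      induction k with
      | zero =>
        refine ⟨by rw [Nat.add_zero, hT, M.hS0 ωs z hzX], ?_, ?_⟩
        · intro w hw
          rw [Nat.add_zero, (untouched T le_rfl).1 w hw, M.hmarks0, M.hmarks0]
        · intro w
          rw [Nat.add_zero, M.hmarks0]
          calc M.marks 0 T ωs w ≤ M.marks 0 0 ωs w := (untouched T le_rfl).2 w
            _ = _ := by rw [M.hmarks0]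
      | succ k ih =>
        obtain ⟨hSk, hEq, hLe⟩ := ih
        have hc_ge : z ≤ M.S z k ωs := by
          rcases Nat.eq_zero_or_pos k with hk | hk
          · rw [hk, M.hS0 ωs z hzX]
          · exact le_of_lt (hzZ.2 k hk)
        have ha : z < M.S z (k + 1) ωs := hzZ.2 (k + 1) (Nat.succ_le_succ (Nat.zero_le k))
        have Hz := H z hzX k
        have H0 := H 0 h0X (T + k)
        have hstep : M.S 0 (T + k + 1) ωs = M.S z (k + 1) ωs := by
          by_contra hab
          have hb_ne_c : M.S 0 (T + k + 1) ωs ≠ M.S z k ωs := by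
            rw [← hSk]; exact H0.1
          have hmb : 1 ≤ M.marks z k ωs (M.S 0 (T + k + 1) ωs) :=
            le_trans H0.2.1 (hLe _)
          have hma : 1 ≤ M.marks 0 (T + k) ωs (M.S z (k + 1) ωs) := by
            rw [hEq _ (le_of_lt ha)]; exact Hz.2.1
          have h1 := H0.2.2 (M.S z (k + 1) ωs) (by rw [hSk]; exact Hz.1)
            (fun h => hab h.symm) hma
          have h2 := Hz.2.2 (M.S 0 (T + k + 1) ωs) hb_ne_c hab hmb
          rw [hSk] at h1
          exact lt_asymm h1 h2
        refine ⟨hstep, ?_, ?_⟩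
        · intro w hw
          show M.marks 0 ((T + k) + 1) ωs w = M.marks z (k + 1) ωs w
          rw [M.hmarksrec, M.hmarksrec, hEq w hw, hSk]
        · intro w
          show M.marks 0 ((T + k) + 1) ωs w ≤ M.marks z (k + 1) ωs w
          rw [M.hmarksrec, M.hmarksrec, hSk]
          exact Nat.sub_le_sub_right (hLe w) _
    -- after the first visit, `z` keeps one mark forever
    have final : ∀ k : ℕ, 1 ≤ M.marks 0 (T + k) ωs z := by
      intro k
      induction k with
      | zero => rw [Nat.add_zero, hmT2]; norm_num
      | succ k ih =>
        show 1 ≤ M.marks 0 ((T + k) + 1) ωs z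
        rcases Nat.eq_zero_or_pos k with hk | hk
        · subst hk
          show 1 ≤ M.marks 0 (T + 1) ωs z
          rw [M.hmarksrec, hmT2, hT, Set.indicator_of_mem (Set.mem_singleton z)]
          simp
        · have hgt : z < M.S 0 (T + k) ωs := by
            rw [(claim2 k).1]; exact hzZ.2 k hk
          have hnm : z ∉ ({M.S 0 (T + k) ωs} : Set ℝ) := by
            simp only [Set.mem_singleton_iff]
            exact ne_of_lt hgt
          rw [M.hmarksrec, Set.indicator_of_notMem hnm, Nat.sub_zero]
          exact ih
    intro n
    rcases le_or_gt n T with h | h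
    · rw [(claim1 n h).1]; norm_num
    · have hn : T + (n - T) = n := Nat.add_sub_cancel' (le_of_lt h)
      have := final (n - T)
      rwa [hn] at this
  · -- the walk from `0` never visits `z`, so `z` keeps both marks
    push_neg at hvis
    have : ∀ n : ℕ, M.marks 0 n ωs z = 2 := by
      intro n
      induction n with
      | zero => exact marks20
      | succ n ih =>
        have hnm : z ∉ ({M.S 0 n ωs} : Set ℝ) :=
          fun h => hvis n (Set.eq_of_mem_singleton h).symm
        rw [M.hmarksrec, Set.indicator_of_notMem hnm, ih]
        rfl
    intro n; rw [this n]; norm_num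

open ProbabilityTheory in
/-- `ℙ²`-almost surely, on the event `[0 ∈ 𝒵]`, the greedy walk started at the origin
never removes all marks from a point `z ∈ 𝒵 ∩ (0,∞)`: `ωₙ(z) ≥ 1` for all `n ≥ 0`. -/
theorem Z_points_are_never_cleared (M : GreedyModel) :
    ∀ᵐ ωs ∂(M.P[|{ωs | (0 : ℝ) ∈ M.Y ωs}]), (0 : ℝ) ∈ ZSet M ωs →
      ∀ z ∈ ZSet M ωs ∩ Set.Ioi (0 : ℝ), ∀ n : ℕ, 1 ≤ M.marks 0 n ωs z := by
  have hac : MeasureTheory.Measure.AbsolutelyContinuous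
      (M.P[|{ωs | (0 : ℝ) ∈ M.Y ωs}]) M.P := cond_absolutelyContinuous
  filter_upwards [M.hwalk.filter_mono hac.ae_le] with ωs H _ z hz
  exact key_never_cleared M ωs H z hz.1 hz.2

end
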